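/- arXiv:2212.09801 — 4 statements merged into one kernel-verified Lean document; each statement's English description precedes it below -/
import Mathlib

section
/- Let e : ℝ × ℝ → ℝ be differentiable, let v : ℝ, and define the fold F : ℝⁿ → ℝ by F(a) = e(e(...e(v, a₀), a₁)..., a_{n-1}). Writing v₀ = v and v_{k+1} = e(v_k, a_k), the partial derivative of F with respect to a_i equals (∏ j > i, ∂₁e(v_{j}, a_j)) * ∂₂e(v_i, a_i). -/
open Finset

private noncomputable def chainD (e : ℝ × ℝ → ℝ) : List ℝ → ℝ → ℝ
  | [], _ => 1
  | y :: l, x => chainD e l (e (x, y)) * deriv (fun z => e (z, y)) x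

private lemma diff_fst (e : ℝ × ℝ → ℝ) (he : Differentiable ℝ e) (y : ℝ) :
    Differentiable ℝ (fun z => e (z, y)) :=
  he.comp (differentiable_id.prodMk (differentiable_const y))

private lemma diff_snd (e : ℝ × ℝ → ℝ) (he : Differentiable ℝ e) (x : ℝ) :
    Differentiable ℝ (fun y => e (x, y)) :=
  he.comp ((differentiable_const x).prodMk differentiable_id)

private lemma hasDeriv_fold (e : ℝ × ℝ → ℝ) (he : Differentiable ℝ e) :
    ∀ (l : List ℝ) (x : ℝ),
      HasDerivAt (fun z => List.foldl (fun p q => e (p, q)) z l) (chainD e l x) x := by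
  intro l
  induction l with
  | nil => intro x; simpa [chainD] using (hasDerivAt_id' x)
  | cons y l ih =>
    intro x
    have hinner : HasDerivAt (fun z => e (z, y)) (deriv (fun z => e (z, y)) x) x :=
      ((diff_fst e he y) x).hasDerivAt
    have := (ih (e (x, y))).comp x hinner
    simpa [chainD, Function.comp_def] using this

private lemma chainD_prod (e : ℝ × ℝ → ℝ) :
    ∀ (m : ℕ) (b : Fin m → ℝ) (w : Fin (m + 1) → ℝ),
      (∀ k : Fin m, w k.succ = e (w k.castSucc, b k)) →
      chainD e (List.ofFn b) (w 0) =
        ∏ k : Fin m, deriv (fun x => e (x, b k)) (w k.castSucc) := by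
  intro m
  induction m with
  | zero => intro b w _; simp [chainD, List.ofFn_zero]
  | succ m ih =>
    intro b w hw
    rw [List.ofFn_succ]
    have h0 : e (w 0, b 0) = (w ∘ Fin.succ) 0 := by
      have := hw 0
      simp at this
      simp [this]
    have hrec := ih (fun k => b k.succ) (w ∘ Fin.succ) (by
      intro k
      have := hw k.succ
      simpa using this)
    rw [chainD, h0, hrec, Fin.prod_univ_succ]
    simp [mul_comm]

private lemma aux_main (e : ℝ × ℝ → ℝ) (he : Differentiable ℝ e) :
    ∀ (n : ℕ) (v : ℝ) (a : Fin n → ℝ) (vseq : Fin (n + 1) → ℝ),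
      vseq 0 = v →
      (∀ k : Fin n, vseq k.succ = e (vseq k.castSucc, a k)) →
      ∀ i : Fin n,
      deriv (fun t =>
          List.foldl (fun x y => e (x, y)) v (List.ofFn (Function.update a i t))) (a i) =
        (∏ j ∈ Finset.univ.filter (fun j : Fin n => i < j),
            deriv (fun x => e (x, a j)) (vseq j.castSucc)) *
          deriv (fun y => e (vseq i.castSucc, y)) (a i) := by
  intro n
  induction n with
  | zero => intro _ _ _ _ _ i; exact absurd i.2 (by omega)
  | succ n ih =>
    intro v a vseq hv0 hvs i
    induction i using Fin.cases with
    | zero =>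
      have hfun : (fun t =>
          List.foldl (fun x y => e (x, y)) v (List.ofFn (Function.update a 0 t))) =
          (fun z => List.foldl (fun x y => e (x, y)) z (List.ofFn fun k : Fin n => a k.succ))
            ∘ (fun t => e (v, t)) := by
        funext t
        simp only [Function.comp_apply]
        rw [List.ofFn_succ, List.foldl_cons, Function.update_self]
        rw [show (fun i : Fin n => Function.update a 0 t i.succ) = (fun k : Fin n => a k.succ)
          from funext fun k => Function.update_of_ne (Fin.succ_ne_zero k) t a]
      rw [hfun]
      have hinner : HasDerivAt (fun t => e (v, t))
          (deriv (fun t => e (v, t)) (a 0)) (a 0) := ((diff_snd e he v) _).hasDerivAt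
      have houter := hasDeriv_fold e he (List.ofFn fun k : Fin n => a k.succ) (e (v, a 0))
      have hcomp := houter.comp (a 0) hinner
      rw [hcomp.deriv]
      have hw : ∀ k : Fin n, (vseq ∘ Fin.succ) k.succ =
          e ((vseq ∘ Fin.succ) k.castSucc, a k.succ) := by
        intro k
        have := hvs k.succ
        simpa using this
      have h0 : e (v, a 0) = (vseq ∘ Fin.succ) 0 := by
        have := hvs 0
        simp [hv0] at this
        simp [this]
      rw [h0, chainD_prod e n (fun k => a k.succ) (vseq ∘ Fin.succ) hw]
      rw [Finset.prod_filter, Fin.prod_univ_succ]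
      simp [hv0]
    | succ j =>
      have hfun : (fun t =>
          List.foldl (fun x y => e (x, y)) v (List.ofFn (Function.update a j.succ t))) =
          (fun t => List.foldl (fun x y => e (x, y)) (e (v, a 0))
            (List.ofFn (Function.update (fun k : Fin n => a k.succ) j t))) := by
        funext t
        rw [List.ofFn_succ, List.foldl_cons,
          Function.update_of_ne (Fin.succ_ne_zero j).symm]
        rw [show (fun i : Fin n => Function.update a j.succ t i.succ) =
            Function.update (fun k : Fin n => a k.succ) j t from funext fun k => by
          by_cases hk : k = j
          · subst hk; simp
          · rw [Function.update_of_ne (fun h => hk (Fin.succ_injective _ h)),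
              Function.update_of_ne hk]]
      have hw : ∀ k : Fin n, (vseq ∘ Fin.succ) k.succ =
          e ((vseq ∘ Fin.succ) k.castSucc, a k.succ) := by
        intro k
        have := hvs k.succ
        simpa using this
      have h00 : (vseq ∘ Fin.succ) 0 = e (v, a 0) := by
        have := hvs 0
        simp [hv0] at this
        simp [this]
      have hIH := ih (e (v, a 0)) (fun k => a k.succ) (vseq ∘ Fin.succ) h00 hw j
      rw [hfun, hIH]
      rw [Finset.prod_filter, Finset.prod_filter, Fin.prod_univ_succ]
      simp [Fin.succ_lt_succ_iff, Fin.not_lt_zero, Function.comp]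

/-- Partial derivative of a left fold `F(a) = foldl e v a` with respect to `a i`:
it equals `(∏ j > i, ∂₁e(v_j, a_j)) * ∂₂e(v_i, a_i)`, where `v_0 = v` and
`v_{k+1} = e (v_k, a_k)` are the intermediate values of the fold. -/
theorem deriv_foldl_component
    (n : ℕ) (e : ℝ × ℝ → ℝ) (he : Differentiable ℝ e) (v : ℝ)
    (a : Fin n → ℝ) (vseq : Fin (n + 1) → ℝ)
    (hv0 : vseq 0 = v)
    (hvs : ∀ k : Fin n, vseq k.succ = e (vseq k.castSucc, a k))
    (i : Fin n) :
    deriv (fun t =>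
        List.foldl (fun x y => e (x, y)) v (List.ofFn (Function.update a i t))) (a i) =
      (∏ j ∈ Finset.univ.filter (fun j : Fin n => i < j),
          deriv (fun x => e (x, a j)) (vseq j.castSucc)) *
        deriv (fun y => e (vseq i.castSucc, y)) (a i) := by
  exact aux_main e he n v a vseq hv0 hvs i
end

section
/- Correctness of reverse-mode for a binary operation composed with two arguments: if e₁, e₂ : ℝⁿ → ℝ are differentiable at x and op : ℝ × ℝ → ℝ is differentiable at (e₁ x, e₂ x), then the gradient of y ↦ op(e₁ y, e₂ y) at x equals ∂₁op(e₁ x, e₂ x) • ∇e₁(x) + ∂₂op(e₁ x, e₂ x) • ∇e₂(x). -/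
/-- Correctness of reverse-mode for a binary operation:
`∇(y ↦ op (e₁ y, e₂ y))(x) = ∂₁op • ∇e₁(x) + ∂₂op • ∇e₂(x)`. -/
theorem gradient_binary_op
    (n : ℕ) (e₁ e₂ : EuclideanSpace ℝ (Fin n) → ℝ)
    (x : EuclideanSpace ℝ (Fin n))
    (h1 : DifferentiableAt ℝ e₁ x) (h2 : DifferentiableAt ℝ e₂ x)
    (op : ℝ × ℝ → ℝ) (hop : DifferentiableAt ℝ op (e₁ x, e₂ x)) :
    gradient (fun y => op (e₁ y, e₂ y)) x =
      (deriv (fun s => op (s, e₂ x)) (e₁ x)) • gradient e₁ x +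
        (deriv (fun s => op (e₁ x, s)) (e₂ x)) • gradient e₂ x := by
  have hL := hop.hasFDerivAt
  set L := fderiv ℝ op (e₁ x, e₂ x) with hLdef
  have hd1 : HasDerivAt (fun s => op (s, e₂ x)) (L (1, 0)) (e₁ x) := by
    have h : HasDerivAt (fun s : ℝ => (s, e₂ x)) ((1 : ℝ), (0 : ℝ)) (e₁ x) :=
      HasDerivAt.prodMk (hasDerivAt_id _) (hasDerivAt_const _ _)
    exact hL.comp_hasDerivAt (e₁ x) h
  have hd2 : HasDerivAt (fun s => op (e₁ x, s)) (L (0, 1)) (e₂ x) := by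
    have h : HasDerivAt (fun s : ℝ => (e₁ x, s)) ((0 : ℝ), (1 : ℝ)) (e₂ x) :=
      HasDerivAt.prodMk (hasDerivAt_const _ _) (hasDerivAt_id _)
    exact hL.comp_hasDerivAt (e₂ x) h
  rw [hd1.deriv, hd2.deriv]
  have hF : HasFDerivAt (fun y => op (e₁ y, e₂ y))
      (L.comp ((fderiv ℝ e₁ x).prod (fderiv ℝ e₂ x))) x :=
    hL.comp x (HasFDerivAt.prodMk h1.hasFDerivAt h2.hasFDerivAt)
  have key : HasGradientAt (fun y => op (e₁ y, e₂ y))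
      (L (1, 0) • gradient e₁ x + L (0, 1) • gradient e₂ x) x := by
    rw [hasGradientAt_iff_hasFDerivAt]
    refine hF.congr_fderiv (Eq.symm ?_)
    ext v
    have hg1 : (fderiv ℝ e₁ x) v = inner ℝ (gradient e₁ x) v := by
      simp [gradient]
    have hg2 : (fderiv ℝ e₂ x) v = inner ℝ (gradient e₂ x) v := by
      simp [gradient]
    have hsplit : ∀ a b : ℝ, (a, b) = a • ((1 : ℝ), (0 : ℝ)) + b • ((0 : ℝ), (1 : ℝ)) := by
      intro a b; simp [Prod.ext_iff]
    rw [ContinuousLinearMap.comp_apply, ContinuousLinearMap.prod_apply, hg1, hg2,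
      hsplit (inner ℝ (gradient e₁ x) v) (inner ℝ (gradient e₂ x) v), map_add, map_smul, map_smul]
    simp only [ContinuousLinearMap.add_apply, ContinuousLinearMap.smul_apply,
      InnerProductSpace.toDual_apply_apply, smul_eq_mul]
    rw [map_add, map_smul, map_smul, smul_eq_mul, smul_eq_mul]
    ring
  exact key.gradient
end

section
/- Correctness of the reverse derivative of map2: let e : ℝ × ℝ → ℝ be differentiable and define F : ℝⁿ × ℝⁿ → ℝⁿ by F(a,b)_i = e(a_i, b_i). Then for any cotangent z : ℝⁿ, the adjoint of the derivative of F at (a,b) applied to z is the pair of vectors (λ i, ∂₁e(a_i,b_i) * z_i , λ i, ∂₂e(a_i,b_i) * z_i). -/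
open ContinuousLinearMap

noncomputable section

lemma fderiv_prod_apply' (e : ℝ × ℝ → ℝ) (he : Differentiable ℝ e) (x y u v : ℝ) :
    fderiv ℝ e (x, y) (u, v) =
      deriv (fun s => e (s, y)) x * u + deriv (fun s => e (x, s)) y * v := by
  have h1 : HasDerivAt (fun s => e (s, y)) (fderiv ℝ e (x, y) (1, 0)) x := by
    have := (he (x, y)).hasFDerivAt.comp_hasDerivAt x
      ((hasDerivAt_id x).prodMk (hasDerivAt_const x y))
    exact this
  have h2 : HasDerivAt (fun s => e (x, s)) (fderiv ℝ e (x, y) (0, 1)) y := by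
    have := (he (x, y)).hasFDerivAt.comp_hasDerivAt y
      ((hasDerivAt_const y x).prodMk (hasDerivAt_id y))
    exact this
  rw [h1.deriv, h2.deriv]
  have huv : (u, v) = u • ((1:ℝ), (0:ℝ)) + v • ((0:ℝ), (1:ℝ)) := by simp [Prod.ext_iff]
  rw [huv, map_add, map_smul, map_smul, smul_eq_mul, smul_eq_mul]
  ring

def phi (n : ℕ) (i : Fin n) :
    WithLp 2 (EuclideanSpace ℝ (Fin n) × EuclideanSpace ℝ (Fin n)) →L[ℝ] ℝ × ℝ :=
  (((PiLp.proj 2 (fun _ : Fin n => ℝ) i).comp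
      ((ContinuousLinearMap.fst ℝ _ _).comp
        (WithLp.prodContinuousLinearEquiv 2 ℝ (EuclideanSpace ℝ (Fin n))
          (EuclideanSpace ℝ (Fin n))).toContinuousLinearMap)).prod
   ((PiLp.proj 2 (fun _ : Fin n => ℝ) i).comp
      ((ContinuousLinearMap.snd ℝ _ _).comp
        (WithLp.prodContinuousLinearEquiv 2 ℝ (EuclideanSpace ℝ (Fin n))
          (EuclideanSpace ℝ (Fin n))).toContinuousLinearMap)))

/-- Correctness of the reverse derivative of `map2`: for the componentwise map
`F(a,b) i = e (a i, b i)`, the adjoint of `DF(a,b)` applied to a cotangent `z`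
is the pair `(fun i => ∂₁e(a i, b i) * z i, fun i => ∂₂e(a i, b i) * z i)`. -/
theorem adjoint_fderiv_map2
    (n : ℕ) (e : ℝ × ℝ → ℝ) (he : Differentiable ℝ e)
    (F : WithLp 2 (EuclideanSpace ℝ (Fin n) × EuclideanSpace ℝ (Fin n)) →
      EuclideanSpace ℝ (Fin n))
    (hF : ∀ p : WithLp 2 (EuclideanSpace ℝ (Fin n) × EuclideanSpace ℝ (Fin n)),
      ∀ i : Fin n, F p i =
        e ((WithLp.equiv 2 (EuclideanSpace ℝ (Fin n) × EuclideanSpace ℝ (Fin n)) p).1 i,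
           (WithLp.equiv 2 (EuclideanSpace ℝ (Fin n) × EuclideanSpace ℝ (Fin n)) p).2 i))
    (a b z : EuclideanSpace ℝ (Fin n)) :
    ContinuousLinearMap.adjoint
        (fderiv ℝ F
          ((WithLp.equiv 2 (EuclideanSpace ℝ (Fin n) × EuclideanSpace ℝ (Fin n))).symm (a, b)))
        z =
      (WithLp.equiv 2 (EuclideanSpace ℝ (Fin n) × EuclideanSpace ℝ (Fin n))).symm
        ((WithLp.toLp 2 (fun i => deriv (fun s => e (s, b i)) (a i) * z i) : EuclideanSpace ℝ (Fin n)),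
         (WithLp.toLp 2 (fun i => deriv (fun s => e (a i, s)) (b i) * z i) : EuclideanSpace ℝ (Fin n))) := by
  set p₀ := (WithLp.equiv 2 (EuclideanSpace ℝ (Fin n) × EuclideanSpace ℝ (Fin n))).symm (a, b)
    with hp₀
  set L : WithLp 2 (EuclideanSpace ℝ (Fin n) × EuclideanSpace ℝ (Fin n)) →L[ℝ]
      EuclideanSpace ℝ (Fin n) :=
    ((PiLp.continuousLinearEquiv 2 ℝ (fun _ : Fin n => ℝ)).symm.toContinuousLinearMap).comp
      (ContinuousLinearMap.pi fun i => (fderiv ℝ e (a i, b i)).comp (phi n i)) with hL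
  -- Step 1: fderiv F p₀ = L
  have hFeq : F = fun p => (PiLp.continuousLinearEquiv 2 ℝ (fun _ : Fin n => ℝ)).symm
      (fun i => e ((phi n i) p)) := by
    funext p
    ext i
    exact hF p i
  have hG : HasFDerivAt
      (fun p (i : Fin n) => e ((phi n i) p))
      (ContinuousLinearMap.pi fun i => (fderiv ℝ e (a i, b i)).comp (phi n i)) p₀ := by
    apply hasFDerivAt_pi''
    intro i
    have h1 : HasFDerivAt (phi n i) (phi n i) p₀ := (phi n i).hasFDerivAt
    have h2 : HasFDerivAt e (fderiv ℝ e ((phi n i) p₀)) ((phi n i) p₀) :=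
      (he _).hasFDerivAt
    exact h2.comp p₀ h1
  have hFd : HasFDerivAt F L p₀ := by
    rw [hFeq]
    exact ((PiLp.continuousLinearEquiv 2 ℝ (fun _ : Fin n => ℝ)).symm.comp_hasFDerivAt_iff).2 hG
  haveI : ContinuousSMul ℝ (WithLp 2 (EuclideanSpace ℝ (Fin n) × EuclideanSpace ℝ (Fin n))) :=
    inferInstance
  rw [hFd.fderiv]
  -- Step 2: adjoint computation
  apply ext_inner_right ℝ
  intro v
  rw [ContinuousLinearMap.adjoint_inner_left]
  rw [WithLp.prod_inner_apply]
  simp only [PiLp.inner_apply, RCLike.inner_apply, starRingEnd_apply, star_trivial]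
  have hLv : ∀ i : Fin n, L v i = fderiv ℝ e (a i, b i) (v.ofLp.1 i, v.ofLp.2 i) := by
    intro i; rfl
  simp only [hLv]
  have key : ∀ i : Fin n, z i * fderiv ℝ e (a i, b i) (v.ofLp.1 i, v.ofLp.2 i)
      = deriv (fun s => e (s, b i)) (a i) * z i * v.ofLp.1 i
        + deriv (fun s => e (a i, s)) (b i) * z i * v.ofLp.2 i := by
    intro i
    rw [fderiv_prod_apply' e he]
    ring
  rw [← Finset.sum_add_distrib]
  refine Finset.sum_congr rfl fun i _ => ?_
  rw [mul_comm, key i]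
  show _ = v.ofLp.1 i * (deriv (fun s => e (s, b i)) (a i) * z i)
    + v.ofLp.2 i * (deriv (fun s => e (a i, s)) (b i) * z i)
  ring
end
end

section
/- Correctness of the reverse derivative of reduce: let e : ℝ × ℝ → ℝ be differentiable with two-sided unit v, and F(a) = foldl e v a with intermediates v₀ = v, v_{k+1} = e(v_k, a_k). Then for any z : ℝ, the adjoint of the derivative of F at a applied to z is the vector whose i-th component is ∂₂e(v_i, a_i) * (∏ j > i, ∂₁e(v_j, a_j)) * z. -/
open Finset


def Pfold (e : ℝ × ℝ → ℝ) (v : ℝ) {n : ℕ} (b : EuclideanSpace ℝ (Fin n)) : ℕ → ℝ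
  | 0 => v
  | k+1 => if h : k < n then e (Pfold e v b k, b ⟨k, h⟩) else Pfold e v b k

lemma Pfold_castSucc (e : ℝ × ℝ → ℝ) (v : ℝ) {n : ℕ} (b : EuclideanSpace ℝ (Fin (n+1)))
    (k : ℕ) (hk : k ≤ n) :
    Pfold e v (WithLp.toLp 2 (fun j : Fin n => b j.castSucc)) k = Pfold e v b k := by
  induction k with
  | zero => rfl
  | succ m ih =>
    have hm : m < n := hk
    simp only [Pfold, dif_pos hm, dif_pos (hm.trans (Nat.lt_succ_self n)), ih hm.le]
    rfl

lemma foldPfold (e : ℝ × ℝ → ℝ) (v : ℝ) : ∀ {n : ℕ} (b : EuclideanSpace ℝ (Fin n)),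
    List.foldl (fun x y => e (x, y)) v (List.ofFn b) = Pfold e v b n := by
  intro n
  induction n with
  | zero => intro b; simp [Pfold]
  | succ m ih =>
    intro b
    rw [List.ofFn_succ', List.concat_eq_append, List.foldl_concat,
      ih (WithLp.toLp 2 (fun j : Fin m => b j.castSucc)), Pfold_castSucc e v b m le_rfl]
    simp only [Pfold, dif_pos (Nat.lt_succ_self m)]
    rfl

noncomputable def Lmap (e : ℝ × ℝ → ℝ) (v : ℝ) {n : ℕ} (a : EuclideanSpace ℝ (Fin n)) :
    ℕ → (EuclideanSpace ℝ (Fin n) →L[ℝ] ℝ)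
  | 0 => 0
  | k+1 => if h : k < n then
      (fderiv ℝ e (Pfold e v a k, a ⟨k, h⟩)).comp
        ((Lmap e v a k).prod (EuclideanSpace.proj (⟨k, h⟩ : Fin n)))
    else Lmap e v a k

lemma Pfold_hasFDerivAt (e : ℝ × ℝ → ℝ) (he : Differentiable ℝ e) (v : ℝ) {n : ℕ}
    (a : EuclideanSpace ℝ (Fin n)) (k : ℕ) :
    HasFDerivAt (fun b => Pfold e v b k) (Lmap e v a k) a := by
  induction k with
  | zero => simpa [Pfold, Lmap] using hasFDerivAt_const v a
  | succ m ih =>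
    by_cases h : m < n
    · simp only [Pfold, Lmap, dif_pos h]
      have hp : HasFDerivAt (𝕜 := ℝ) (fun b : EuclideanSpace ℝ (Fin n) => (b ⟨m, h⟩ : ℝ))
          (EuclideanSpace.proj (⟨m, h⟩ : Fin n)) a :=
        (EuclideanSpace.proj (𝕜 := ℝ) (⟨m, h⟩ : Fin n)).hasFDerivAt
      exact (he _).hasFDerivAt.comp a (ih.prodMk hp)
    · simpa only [Pfold, Lmap, dif_neg h] using ih

lemma fderiv_pair (e : ℝ × ℝ → ℝ) (he : Differentiable ℝ e) (p : ℝ × ℝ) (u w : ℝ) :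
    fderiv ℝ e p (u, w) =
      deriv (fun x => e (x, p.2)) p.1 * u + deriv (fun y => e (p.1, y)) p.2 * w := by
  have h1 : HasDerivAt (fun x => e (x, p.2)) (fderiv ℝ e p ((1:ℝ), (0:ℝ))) p.1 := by
    have := (he p).hasFDerivAt.comp_hasDerivAt p.1
      ((hasDerivAt_id p.1).prodMk (hasDerivAt_const p.1 p.2))
    simpa [Function.comp_def] using this
  have h2 : HasDerivAt (fun y => e (p.1, y)) (fderiv ℝ e p ((0:ℝ), (1:ℝ))) p.2 := by
    have := (he p).hasFDerivAt.comp_hasDerivAt p.2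
      ((hasDerivAt_const p.2 p.1).prodMk (hasDerivAt_id p.2))
    simpa [Function.comp_def] using this
  rw [h1.deriv, h2.deriv]
  have huw : (u, w) = u • ((1:ℝ), (0:ℝ)) + w • ((0:ℝ), (1:ℝ)) := by
    simp [Prod.ext_iff]
  rw [huw, map_add, map_smul, map_smul, smul_eq_mul, smul_eq_mul]
  ring

/-- Correctness of the reverse derivative of `reduce`: for the left fold
`F(a) = foldl e v a` with intermediates `v_0 = v`, `v_{k+1} = e (v_k, a_k)`,
the adjoint of `DF(a)` applied to `z : ℝ` has `i`-th component
`∂₂e(v_i, a_i) * (∏ j > i, ∂₁e(v_j, a_j)) * z`. -/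
theorem adjoint_fderiv_reduce
    (n : ℕ) (e : ℝ × ℝ → ℝ) (he : Differentiable ℝ e) (v : ℝ)
    (h1 : ∀ x, e (v, x) = x) (h2 : ∀ x, e (x, v) = x)
    (F : EuclideanSpace ℝ (Fin n) → ℝ)
    (hF : ∀ a : EuclideanSpace ℝ (Fin n),
      F a = List.foldl (fun x y => e (x, y)) v (List.ofFn a))
    (a : EuclideanSpace ℝ (Fin n)) (vseq : Fin (n + 1) → ℝ)
    (hv0 : vseq 0 = v)
    (hvs : ∀ k : Fin n, vseq k.succ = e (vseq k.castSucc, a k))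
    (z : ℝ) (i : Fin n) :
    ContinuousLinearMap.adjoint (fderiv ℝ F a) z i =
      deriv (fun y => e (vseq i.castSucc, y)) (a i) *
        (∏ j ∈ Finset.univ.filter (fun j : Fin n => i < j),
          deriv (fun x => e (x, a j)) (vseq j.castSucc)) * z := by
  have hFeq : F = fun b => Pfold e v b n := funext fun b => (hF b).trans (foldPfold e v b)
  have hFd : HasFDerivAt F (Lmap e v a n) a := by
    rw [hFeq]; exact Pfold_hasFDerivAt e he v a n
  have hfd : fderiv ℝ F a = Lmap e v a n := hFd.fderiv
  have hPv : ∀ k (hk : k ≤ n), Pfold e v a k = vseq ⟨k, Nat.lt_succ_of_le hk⟩ := by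
    intro k
    induction k with
    | zero => intro _; simpa [Pfold] using hv0.symm
    | succ m ih =>
      intro hk
      have hm : m < n := hk
      simp only [Pfold, dif_pos hm, ih hm.le]
      exact (hvs ⟨m, hm⟩).symm
  set g : ℕ → ℝ := fun j =>
    if h : j < n then deriv (fun x => e (x, a ⟨j, h⟩)) (vseq (Fin.castSucc ⟨j, h⟩)) else 1 with hg
  have key : ∀ k, k ≤ n → (Lmap e v a k) (EuclideanSpace.single i 1) =
      if i.val < k then
        deriv (fun y => e (vseq i.castSucc, y)) (a i) * ∏ j ∈ Finset.Ico (i.val + 1) k, g j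
      else 0 := by
    intro k
    induction k with
    | zero => intro _; simp [Lmap]
    | succ m ih =>
      intro hk
      have hm : m < n := hk
      have hD : (Lmap e v a (m + 1)) (EuclideanSpace.single i 1) =
          deriv (fun x => e (x, a ⟨m, hm⟩)) (Pfold e v a m) *
            ((Lmap e v a m) (EuclideanSpace.single i 1)) +
          deriv (fun y => e (Pfold e v a m, y)) (a ⟨m, hm⟩) *
            (EuclideanSpace.single i 1 ⟨m, hm⟩) := by
        simp only [Lmap, dif_pos hm, ContinuousLinearMap.comp_apply,
          ContinuousLinearMap.prod_apply, PiLp.proj_apply]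
        exact fderiv_pair e he (Pfold e v a m, a ⟨m, hm⟩) _ _
      rcases lt_trichotomy m i.val with hcase | hcase | hcase
      · have h1' : ¬ i.val < m := by omega
        have h2' : ¬ i.val < m + 1 := by omega
        have hne : (⟨m, hm⟩ : Fin n) ≠ i := fun hh => by
          have := congrArg Fin.val hh; simp at this; omega
        rw [hD, ih hm.le, if_neg h1', if_neg h2']
        simp [EuclideanSpace.single_apply, hne]
      · have h1' : ¬ i.val < m := by omega
        have h2' : i.val < m + 1 := by omega
        have heq : (⟨m, hm⟩ : Fin n) = i := Fin.ext hcase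
        have hcast : (⟨m, Nat.lt_succ_of_le hm.le⟩ : Fin (n + 1)) = i.castSucc :=
          Fin.ext (by simpa using hcase)
        rw [hD, ih hm.le, if_neg h1', if_pos h2',
          show Finset.Ico (i.val + 1) (m + 1) = ∅ by
            rw [Finset.Ico_eq_empty_iff]; omega,
          hPv m hm.le, hcast, heq]
        simp [EuclideanSpace.single_apply]
      · have h1' : i.val < m := hcase
        have h2' : i.val < m + 1 := by omega
        have hne : (⟨m, hm⟩ : Fin n) ≠ i := fun hh => by
          have := congrArg Fin.val hh; simp at this; omega
        rw [hD, ih hm.le, if_pos h1', if_pos h2',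
          Finset.prod_Ico_succ_top (by omega : i.val + 1 ≤ m)]
        have hgm : g m = deriv (fun x => e (x, a ⟨m, hm⟩)) (Pfold e v a m) := by
          rw [hg]; simp only [dif_pos hm]
          rw [hPv m hm.le]
          rfl
        rw [hgm]
        simp only [EuclideanSpace.single_apply, if_neg hne]
        ring
  have hadj : (ContinuousLinearMap.adjoint (fderiv ℝ F a)) z i =
      (fderiv ℝ F a) (EuclideanSpace.single i 1) * z := by
    have h := ContinuousLinearMap.adjoint_inner_right (𝕜 := ℝ) (fderiv ℝ F a)
      (EuclideanSpace.single i 1) z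
    rw [EuclideanSpace.inner_single_left] at h
    rw [mul_comm]
    simpa [RCLike.inner_apply] using h
  have hprod : (∏ j ∈ Finset.univ.filter (fun j : Fin n => i < j),
      deriv (fun x => e (x, a j)) (vseq j.castSucc)) =
      ∏ j ∈ Finset.Ico (i.val + 1) n, g j := by
    rw [Finset.prod_filter]
    have hstep : ∀ j : Fin n,
        (if i < j then deriv (fun x => e (x, a j)) (vseq j.castSucc) else 1) =
        (fun m : ℕ => if i.val < m then g m else 1) (j : ℕ) := by
      intro j
      show _ = if i.val < (j : ℕ) then g (j : ℕ) else 1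
      by_cases hj : i < j
      · rw [if_pos hj, if_pos (show i.val < (j : ℕ) from hj), hg]
        simp only [dif_pos j.isLt]
      · rw [if_neg hj, if_neg (show ¬ i.val < (j : ℕ) from hj)]
    rw [Finset.prod_congr rfl (fun j _ => hstep j),
      Fin.prod_univ_eq_prod_range (fun m : ℕ => if i.val < m then g m else 1) n,
      ← Finset.prod_filter]
    congr 1
    ext m
    simp only [Finset.mem_filter, Finset.mem_range, Finset.mem_Ico]
    omega
  rw [hadj, hfd, key n le_rfl, if_pos i.isLt, hprod]
end
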